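/- If T is a tree with finitely many leaves and at least one vertex of degree at least 3, then there is no leaf x of T such that T is isomorphic to T - x. -/

import Mathlib

open SimpleGraph Set

/-- A leaf of a graph: a vertex with exactly one neighbor (degree 1). -/
def IsLeaf {V : Type*} (G : SimpleGraph V) (x : V) : Prop :=
  (G.neighborSet x).encard = 1

/-- `v` is in the core `c(T)`: deleting `v` leaves at least two infinite components. -/
def InCore {V : Type*} (G : SimpleGraph V) (v : V) : Prop :=
  ∃ C D : (G.induce {u | u ≠ v}).ConnectedComponent,
    C ≠ D ∧ C.supp.Infinite ∧ D.supp.Infinite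

/-- Distance to the set of branch vertices (vertices of degree ≥ 3). -/
private noncomputable def bd {V : Type*} (G : SimpleGraph V) (v : V) : ℕ :=
  sInf ((G.dist v) '' {w | 3 ≤ (G.neighborSet w).encard})

/-- Sum over all leaves of the distance to the branch set. -/
private noncomputable def lsum {V : Type*} (G : SimpleGraph V) : ℕ :=
  ∑ᶠ ℓ ∈ {v | IsLeaf G v}, bd G ℓ

private lemma iso_encard {V W : Type*} {G : SimpleGraph V} {H : SimpleGraph W}
    (φ : G ≃g H) (v : V) : (H.neighborSet (φ v)).encard = (G.neighborSet v).encard :=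
  (Set.encard_congr (φ.mapNeighborSet v)).symm

private lemma iso_dist_le {V W : Type*} {G : SimpleGraph V} {H : SimpleGraph W}
    (φ : G ≃g H) (u v : V) : H.dist (φ u) (φ v) ≤ G.dist u v := by
  by_cases hr : G.Reachable u v
  · obtain ⟨p, hp⟩ := hr.exists_walk_length_eq_dist
    calc H.dist (φ u) (φ v) ≤ (p.map φ.toHom).length := SimpleGraph.dist_le _
    _ = G.dist u v := by rw [SimpleGraph.Walk.length_map]; exact hp
  · have : ¬ H.Reachable (φ u) (φ v) := by
      intro h
      have := h.map φ.symm.toHom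
      simp at this
      exact hr this
    rw [SimpleGraph.dist_eq_zero_of_not_reachable this]
    exact Nat.zero_le _

private lemma iso_dist {V W : Type*} {G : SimpleGraph V} {H : SimpleGraph W}
    (φ : G ≃g H) (u v : V) : H.dist (φ u) (φ v) = G.dist u v := by
  refine le_antisymm (iso_dist_le φ u v) ?_
  have := iso_dist_le φ.symm (φ u) (φ v)
  simpa using this

private lemma iso_branch {V W : Type*} {G : SimpleGraph V} {H : SimpleGraph W}
    (φ : G ≃g H) :
    {w | 3 ≤ (H.neighborSet w).encard} = φ '' {w | 3 ≤ (G.neighborSet w).encard} := by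
  ext w
  constructor
  · intro hw
    refine ⟨φ.symm w, ?_, by simp⟩
    have := iso_encard φ.symm w
    simp only [Set.mem_setOf_eq] at hw ⊢
    rwa [this]
  · rintro ⟨v, hv, rfl⟩
    simpa [Set.mem_setOf_eq, iso_encard φ v] using hv

private lemma iso_bd {V W : Type*} {G : SimpleGraph V} {H : SimpleGraph W}
    (φ : G ≃g H) (v : V) : bd H (φ v) = bd G v := by
  unfold bd
  congr 1
  rw [iso_branch φ, Set.image_image]
  ext n
  simp only [Set.mem_image]
  exact ⟨fun ⟨b, hb, h⟩ => ⟨b, hb, by rwa [iso_dist φ v b] at h⟩,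
    fun ⟨b, hb, h⟩ => ⟨b, hb, by rwa [iso_dist φ v b]⟩⟩

private lemma iso_leafset {V W : Type*} {G : SimpleGraph V} {H : SimpleGraph W}
    (φ : G ≃g H) : {w | IsLeaf H w} = φ '' {v | IsLeaf G v} := by
  ext w
  constructor
  · intro hw
    refine ⟨φ.symm w, ?_, by simp⟩
    have := iso_encard φ.symm w
    simp only [Set.mem_setOf_eq, IsLeaf] at hw ⊢
    rwa [this]
  · rintro ⟨v, hv, rfl⟩
    simpa [Set.mem_setOf_eq, IsLeaf, iso_encard φ v] using hv

private lemma iso_lsum {V W : Type*} {G : SimpleGraph V} {H : SimpleGraph W}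
    (φ : G ≃g H) : lsum H = lsum G := by
  unfold lsum
  rw [iso_leafset φ, finsum_mem_image (g := ⇑φ)
    (Function.Injective.injOn (fun a b h => φ.toEquiv.injective h))]
  exact finsum_mem_congr rfl fun v hv => iso_bd φ v

section LeafDeletion

variable {V : Type*} {G : SimpleGraph V} {x : V}

private lemma leaf_not_mem_support (hx : IsLeaf G x) {u v : V} (p : G.Walk u v)
    (hp : p.IsPath) (hu : u ≠ x) (hv : v ≠ x) : x ∉ p.support := by
  obtain ⟨y, hy⟩ := Set.encard_eq_one.mp hx
  induction p with
  | nil => simpa using hu.symm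
  | @cons a b c h q ih =>
    rw [SimpleGraph.Walk.support_cons, List.mem_cons]
    push_neg
    refine ⟨hu.symm, ?_⟩
    rw [SimpleGraph.Walk.cons_isPath_iff] at hp
    by_cases hbx : b = x
    · subst hbx
      cases q with
      | nil => exact absurd rfl hv
      | @cons _ d _ h' q' =>
        exfalso
        have ha : a ∈ G.neighborSet b := h.symm
        have hd : d ∈ G.neighborSet b := h'
        rw [hy, Set.mem_singleton_iff] at ha hd
        apply hp.2
        rw [SimpleGraph.Walk.support_cons, List.mem_cons]
        right
        rw [ha, ← hd]
        exact q'.start_mem_support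
    · exact ih hp.1 hbx hv

private lemma exists_induce_walk {s : Set V} :
    ∀ {u v : V} (p : G.Walk u v), (∀ w ∈ p.support, w ∈ s) →
      ∀ (hu : u ∈ s) (hv : v ∈ s),
      ∃ q : (G.induce s).Walk ⟨u, hu⟩ ⟨v, hv⟩, q.length = p.length := by
  intro u v p
  induction p with
  | nil => intro _ hu hv; exact ⟨SimpleGraph.Walk.nil, rfl⟩
  | @cons a b c h q ih =>
    intro hs hu hv
    have hb : b ∈ s := hs b (by simp)
    obtain ⟨q', hq'⟩ := ih (fun w hw => hs w (by simp [hw])) hb hv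
    exact ⟨SimpleGraph.Walk.cons (by exact h) q', congrArg (· + 1) hq'⟩

private lemma dist_induce (hconn : G.Connected) (hx : IsLeaf G x) {u v : V}
    (hu : u ≠ x) (hv : v ≠ x) :
    (G.induce {w | w ≠ x}).dist ⟨u, hu⟩ ⟨v, hv⟩ = G.dist u v := by
  obtain ⟨p, hp, hlen⟩ := hconn.exists_path_of_dist u v
  have hsup : ∀ w ∈ p.support, w ∈ {w | w ≠ x} := by
    intro w hw
    have := leaf_not_mem_support hx p hp hu hv
    exact fun h => this (h ▸ hw)
  obtain ⟨q, hq⟩ := exists_induce_walk p hsup hu hv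
  refine le_antisymm ?_ ?_
  · calc (G.induce {w | w ≠ x}).dist ⟨u, hu⟩ ⟨v, hv⟩ ≤ q.length := SimpleGraph.dist_le _
    _ = G.dist u v := by rw [hq, hlen]
  · have hr : (G.induce {w | w ≠ x}).Reachable ⟨u, hu⟩ ⟨v, hv⟩ := ⟨q⟩
    obtain ⟨q₀, hq₀⟩ := hr.exists_walk_length_eq_dist
    calc G.dist u v ≤ (q₀.map (SimpleGraph.Embedding.induce {w | w ≠ x}).toHom).length :=
        SimpleGraph.dist_le _
    _ = _ := by rw [SimpleGraph.Walk.length_map, hq₀]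

private lemma induce_neighbor_encard {v : V} (hv : v ≠ x) :
    ((G.induce {w | w ≠ x}).neighborSet ⟨v, hv⟩).encard
      = (G.neighborSet v \ {x}).encard := by
  apply Set.encard_congr
  exact ⟨fun w => ⟨w.1.1, w.2, w.1.2⟩, fun w => ⟨⟨w.1, w.2.2⟩, w.2.1⟩,
    fun w => rfl, fun w => rfl⟩

private lemma dist_leaf (hconn : G.Connected) {y : V} (hy : G.neighborSet x = {y})
    {b : V} (hb : b ≠ x) : G.dist x b = G.dist y b + 1 := by
  have hadj : G.Adj x y := by
    have : y ∈ G.neighborSet x := by rw [hy]; rfl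
    exact this
  refine le_antisymm ?_ ?_
  · calc G.dist x b ≤ G.dist x y + G.dist y b := hconn.dist_triangle
    _ = 1 + G.dist y b := by rw [SimpleGraph.dist_eq_one_iff_adj.mpr hadj]
    _ = G.dist y b + 1 := by ring
  · obtain ⟨p, hp, hlen⟩ := hconn.exists_path_of_dist x b
    cases p with
    | nil => exact absurd rfl (Ne.symm hb)
    | @cons _ w _ h q =>
      have hw : w = y := by
        have : w ∈ G.neighborSet x := h
        rwa [hy, Set.mem_singleton_iff] at this
      have h2 : G.dist y b ≤ q.length := hw ▸ SimpleGraph.dist_le q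
      simp only [SimpleGraph.Walk.length_cons] at hlen
      omega

private lemma bd_leaf (hconn : G.Connected) (hx : IsLeaf G x) {y : V}
    (hy : G.neighborSet x = {y})
    (hBne : {w | 3 ≤ (G.neighborSet w).encard}.Nonempty) : bd G x = bd G y + 1 := by
  set B := {w | 3 ≤ (G.neighborSet w).encard} with hB
  have hbx : ∀ b ∈ B, b ≠ x := by
    rintro b hb rfl
    have h1 : (G.neighborSet b).encard = 1 := hx
    rw [hB, Set.mem_setOf_eq, h1] at hb
    norm_num at hb
  have hshift : ∀ b ∈ B, G.dist x b = G.dist y b + 1 :=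
    fun b hb => dist_leaf hconn hy (hbx b hb)
  have hxne : ((G.dist x) '' B).Nonempty := hBne.image _
  have hyne : ((G.dist y) '' B).Nonempty := hBne.image _
  unfold bd
  rw [← hB]
  refine le_antisymm ?_ ?_
  · obtain ⟨b₀, hb₀, hb₀n⟩ := Nat.sInf_mem hyne
    calc sInf ((G.dist x) '' B) ≤ G.dist x b₀ := Nat.sInf_le ⟨b₀, hb₀, rfl⟩
    _ = G.dist y b₀ + 1 := hshift b₀ hb₀
    _ = sInf ((G.dist y) '' B) + 1 := by rw [hb₀n]
  · obtain ⟨b₁, hb₁, hb₁n⟩ := Nat.sInf_mem hxne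
    have h2 : sInf ((G.dist y) '' B) ≤ G.dist y b₁ := Nat.sInf_le ⟨b₁, hb₁, rfl⟩
    have h3 : G.dist y b₁ + 1 = G.dist x b₁ := (hshift b₁ hb₁).symm
    omega

end LeafDeletion

/-- a tree with finitely many leaves and a vertex of degree ≥ 3
is not isomorphic to T - x for any leaf x. -/
theorem stmt_0 {V : Type*} (G : SimpleGraph V) (hT : G.IsTree)
    (hfin : {x | IsLeaf G x}.Finite)
    (hdeg : ∃ v, 3 ≤ (G.neighborSet v).encard) :
    ¬ ∃ x, IsLeaf G x ∧ Nonempty (G ≃g G.induce {v | v ≠ x}) := by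
  classical
  rintro ⟨x, hx, ⟨φ⟩⟩
  have hconn : G.Connected := hT.isConnected
  obtain ⟨y, hy⟩ := Set.encard_eq_one.mp hx
  have hyx : y ≠ x := by
    rintro rfl
    have : y ∈ G.neighborSet y := by rw [hy]; rfl
    exact G.loopless.irrefl y this
  have hxy_adj : G.Adj x y := by
    have : y ∈ G.neighborSet x := by rw [hy]; rfl
    exact this
  have hxNy : x ∈ G.neighborSet y := hxy_adj.symm
  have hnotadj : ∀ v : V, v ≠ y → x ∉ G.neighborSet v := by
    intro v hvy hmem
    have h1 : G.Adj v x := hmem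
    have h2 : v ∈ G.neighborSet x := h1.symm
    rw [hy, Set.mem_singleton_iff] at h2
    exact hvy h2
  set L : Set V := {v | IsLeaf G v} with hL
  have hx_mem_L : x ∈ L := hx
  have hN' : ∀ (v : V) (hv : v ≠ x),
      ((G.induce {w | w ≠ x}).neighborSet ⟨v, hv⟩).encard
        = (G.neighborSet v \ {x}).encard := fun v hv => induce_neighbor_encard hv
  have hNne : ∀ (v : V), v ≠ y → G.neighborSet v \ {x} = G.neighborSet v := fun v hv =>
    Set.diff_singleton_eq_self (hnotadj v hv)
  have hφinj : Function.Injective (⇑φ) := fun a b h => φ.toEquiv.injective h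
  set L' : Set ↥{v | v ≠ x} := {w | IsLeaf (G.induce {v | v ≠ x}) w} with hL'
  have hL'img : L' = ⇑φ '' L := iso_leafset φ
  set Lsub : Set V := Subtype.val '' L' with hLsub
  have hcard1 : Lsub.encard = L.encard := by
    rw [hLsub, Subtype.val_injective.injOn.encard_image, hL'img,
      hφinj.injOn.encard_image]
  have hmem : ∀ v : V, v ∈ Lsub ↔ ∃ _ : v ≠ x, (G.neighborSet v \ {x}).encard = 1 := by
    intro v
    constructor
    · rintro ⟨⟨w, hw⟩, hwL, rfl⟩
      refine ⟨hw, ?_⟩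
      rw [← hN' w hw]
      exact hwL
    · rintro ⟨hv, h⟩
      refine ⟨⟨v, hv⟩, ?_, rfl⟩
      show IsLeaf _ _
      rw [IsLeaf, hN' v hv]
      exact h
  have hNy : (G.neighborSet y \ {x}).encard + 1 = (G.neighborSet y).encard :=
    Set.encard_diff_singleton_add_one hxNy
  have hdeg2 : (G.neighborSet y).encard = 2 := by
    by_contra hne2
    have hsub : Lsub ⊆ L \ {x} := by
      intro v hv
      rw [hmem v] at hv
      obtain ⟨hvx, h1⟩ := hv
      have hvy : v ≠ y := by
        rintro rfl
        apply hne2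
        rw [← hNy, h1]
        exact one_add_one_eq_two
      rw [hNne v hvy] at h1
      exact ⟨h1, hvx⟩
    have h2 : (L \ {x}).encard + 1 = L.encard := Set.encard_diff_singleton_add_one hx_mem_L
    have h3 : L.encard ≤ (L \ {x}).encard := hcard1 ▸ Set.encard_le_encard hsub
    have h4 : (L \ {x}).encard ≠ ⊤ := ((hfin.diff).encard_lt_top).ne
    exact absurd ((ENat.add_one_le_iff h4).mp (h2.trans_le h3)) (lt_irrefl _)
  have hy_deg' : (G.neighborSet y \ {x}).encard = 1 := by
    rw [hdeg2] at hNy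
    exact WithTop.add_right_cancel (by simp : (1 : ℕ∞) ≠ ⊤)
      (hNy.trans one_add_one_eq_two.symm)
  have hyL : y ∉ L := by
    intro h
    have h1 : (G.neighborSet y).encard = 1 := h
    rw [hdeg2] at h1
    norm_num at h1
  have hLsub_eq : Lsub = insert y (L \ {x}) := by
    ext v
    rw [hmem v, Set.mem_insert_iff]
    constructor
    · rintro ⟨hvx, h1⟩
      by_cases hvy : v = y
      · exact Or.inl hvy
      · rw [hNne v hvy] at h1
        exact Or.inr ⟨h1, hvx⟩
    · rintro (rfl | ⟨hvL, hvx⟩)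
      · exact ⟨hyx, hy_deg'⟩
      · refine ⟨hvx, ?_⟩
        have hvy : v ≠ y := fun h => hyL (h ▸ hvL)
        rw [hNne v hvy]
        exact hvL
  have hBiff : ∀ (v : V) (hv : v ≠ x),
      (3 ≤ ((G.induce {w | w ≠ x}).neighborSet ⟨v, hv⟩).encard)
        ↔ 3 ≤ (G.neighborSet v).encard := by
    intro v hv
    rw [hN' v hv]
    by_cases hvy : v = y
    · subst hvy
      rw [hy_deg', hdeg2]
      norm_num
    · rw [hNne v hvy]
  have hbd : ∀ (w : ↥{v | v ≠ x}), bd (G.induce {v | v ≠ x}) w = bd G w.1 := by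
    rintro ⟨v, hv⟩
    have hv : v ≠ x := hv
    unfold bd
    congr 1
    ext n
    simp only [Set.mem_image, Set.mem_setOf_eq]
    constructor
    · rintro ⟨⟨b, hb⟩, h3, rfl⟩
      exact ⟨b, (hBiff b hb).mp h3, (dist_induce hconn hx hv hb).symm⟩
    · rintro ⟨b, h3, rfl⟩
      have hbx : b ≠ x := by
        rintro rfl
        have h1 : (G.neighborSet b).encard = 1 := hx
        rw [h1] at h3
        norm_num at h3
      exact ⟨⟨b, hbx⟩, (hBiff b hbx).mpr h3, dist_induce hconn hx hv hbx⟩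
  obtain ⟨v₀, hv₀⟩ := hdeg
  have hBne : {w | 3 ≤ (G.neighborSet w).encard}.Nonempty := ⟨v₀, hv₀⟩
  have hbdxy : bd G x = bd G y + 1 := bd_leaf hconn hx hy hBne
  have h1 : lsum (G.induce {v | v ≠ x}) = lsum G := iso_lsum φ
  have h2 : lsum (G.induce {v | v ≠ x}) = ∑ᶠ v ∈ Lsub, bd G v := by
    unfold lsum
    rw [hLsub, finsum_mem_image (Subtype.val_injective.injOn)]
    refine finsum_mem_congr rfl fun w hw => ?_
    rw [hbd w]
  have hfinLx : (L \ {x}).Finite := hfin.diff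
  have hxF : x ∈ hfin.toFinset := by rw [hfin.mem_toFinset]; exact hx_mem_L
  have herase : hfin.toFinset.erase x = hfinLx.toFinset := by
    ext v
    simp only [Finset.mem_erase, hfin.mem_toFinset, hfinLx.mem_toFinset, Set.mem_diff,
      Set.mem_singleton_iff]
    tauto
  have e1 : lsum G = bd G x + ∑ v ∈ hfinLx.toFinset, bd G v := by
    unfold lsum
    rw [finsum_mem_eq_finite_toFinset_sum _ hfin, ← Finset.add_sum_erase _ _ hxF, herase]
  have hyF : y ∉ hfinLx.toFinset := by
    rw [hfinLx.mem_toFinset]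
    exact fun h => hyL h.1
  have e2 : lsum (G.induce {v | v ≠ x}) = bd G y + ∑ v ∈ hfinLx.toFinset, bd G v := by
    rw [h2, hLsub_eq, finsum_mem_eq_finite_toFinset_sum _ (hfinLx.insert y),
      Set.Finite.toFinset_insert, Finset.sum_insert (by simpa using hyF)]
  rw [h1, e1] at e2
  omega
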